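/- Let k be a field of characteristic zero, S = k[x,y,z], and N = (x^2, y^2)/(x^4, y^4, z^3), a graded S-module. Then dim_k N_3 = dim_k N_6 = 6, and the multiplication map ×(x+y+z)^3 : N_3 → N_6 is not injective (the class of (x−y)(x^2+y^2) lies in its kernel); consequently N does not have the strong Lefschetz property. -/

import Mathlib

open MvPolynomial

/-- The degree-`i` homogeneous component of the graded `k[x₁,…,xₙ]`-module `I/J`. -/
noncomputable def gradedPiece {k : Type} [Field k] {n : ℕ}
    (J I : Ideal (MvPolynomial (Fin n) k)) (i : ℕ) :
    Submodule k (MvPolynomial (Fin n) k ⧸ J) :=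
  Submodule.map (Ideal.Quotient.mkₐ k J).toLinearMap
    (Submodule.restrictScalars k I ⊓ homogeneousSubmodule (Fin n) k i)

/-- `ℓ` is a strong Lefschetz element for the graded module `I/J`. -/
def IsSLE {k : Type} [Field k] {n : ℕ} (J I : Ideal (MvPolynomial (Fin n) k))
    (ℓ : MvPolynomial (Fin n) k) : Prop :=
  ∀ d : ℕ, 0 < d → ∀ i : ℕ,
    (∀ m ∈ gradedPiece J I i, Ideal.Quotient.mk J (ℓ ^ d) * m = 0 → m = 0) ∨
    (∀ m' ∈ gradedPiece J I (i + d), ∃ m ∈ gradedPiece J I i,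
      Ideal.Quotient.mk J (ℓ ^ d) * m = m')

/-- The graded module `I/J` has the strong Lefschetz property. -/
def HasSLP {k : Type} [Field k] {n : ℕ} (J I : Ideal (MvPolynomial (Fin n) k)) : Prop :=
  ∃ ℓ ∈ homogeneousSubmodule (Fin n) k 1, IsSLE J I ℓ

namespace Stmt18Aux

variable {k : Type} [Field k]

/-- Builder for finitely supported functions on `Fin 3`. -/
noncomputable def fs (a b c : ℕ) : Fin 3 →₀ ℕ :=
  Finsupp.single 0 a + Finsupp.single 1 b + Finsupp.single 2 c

@[simp] lemma fs_apply0 (a b c : ℕ) : fs a b c 0 = a := by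
  simp [fs, Finsupp.single_apply]

@[simp] lemma fs_apply1 (a b c : ℕ) : fs a b c 1 = b := by
  simp [fs, Finsupp.single_apply]

@[simp] lemma fs_apply2 (a b c : ℕ) : fs a b c 2 = c := by
  simp [fs, Finsupp.single_apply]

lemma fs_eq_self (m : Fin 3 →₀ ℕ) : fs (m 0) (m 1) (m 2) = m := by
  ext i
  fin_cases i <;> simp

lemma fs_eq_iff {a b c a' b' c' : ℕ} :
    fs a b c = fs a' b' c' ↔ a = a' ∧ b = b' ∧ c = c' := by
  constructor
  · intro h
    refine ⟨?_, ?_, ?_⟩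
    · simpa using DFunLike.congr_fun h 0
    · simpa using DFunLike.congr_fun h 1
    · simpa using DFunLike.congr_fun h 2
  · rintro ⟨rfl, rfl, rfl⟩; rfl

lemma fs_le_iff {a b c : ℕ} {m : Fin 3 →₀ ℕ} :
    fs a b c ≤ m ↔ a ≤ m 0 ∧ b ≤ m 1 ∧ c ≤ m 2 := by
  rw [Finsupp.le_def]
  constructor
  · intro h; exact ⟨by simpa using h 0, by simpa using h 1, by simpa using h 2⟩
  · rintro ⟨h0, h1, h2⟩ i
    fin_cases i <;> simpa

lemma degree_eq (m : Fin 3 →₀ ℕ) : m.degree = m 0 + m 1 + m 2 := by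
  classical
  rw [Finsupp.degree_apply, Finset.sum_subset (Finset.subset_univ _)
    (fun i _ hi => by simpa using Finsupp.notMem_support_iff.mp hi)]
  exact Fin.sum_univ_three m

@[simp] lemma fs_degree (a b c : ℕ) : (fs a b c).degree = a + b + c := by
  rw [degree_eq]; simp

lemma fs_single0 (n : ℕ) : fs n 0 0 = Finsupp.single 0 n := by simp [fs]
lemma fs_single1 (n : ℕ) : fs 0 n 0 = Finsupp.single 1 n := by simp [fs]
lemma fs_single2 (n : ℕ) : fs 0 0 n = Finsupp.single 2 n := by simp [fs]

lemma X_pow_mon (n : ℕ) (i : Fin 3) :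
    (X i ^ n : MvPolynomial (Fin 3) k) = monomial (Finsupp.single i n) 1 :=
  X_pow_eq_monomial

lemma J_eq_mon :
    (Ideal.span {X 0 ^ 4, X 1 ^ 4, X 2 ^ 3} : Ideal (MvPolynomial (Fin 3) k)) =
      Ideal.span ((fun s => monomial s (1 : k)) '' {fs 4 0 0, fs 0 4 0, fs 0 0 3}) := by
  rw [Set.image_insert_eq, Set.image_insert_eq, Set.image_singleton,
    fs_single0, fs_single1, fs_single2, ← X_pow_mon, ← X_pow_mon, ← X_pow_mon]

lemma I_eq_mon :
    (Ideal.span {X 0 ^ 2, X 1 ^ 2} : Ideal (MvPolynomial (Fin 3) k)) =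
      Ideal.span ((fun s => monomial s (1 : k)) '' {fs 2 0 0, fs 0 2 0}) := by
  rw [Set.image_insert_eq, Set.image_singleton,
    fs_single0, fs_single1, ← X_pow_mon, ← X_pow_mon]

lemma mem_J_iff {p : MvPolynomial (Fin 3) k} :
    p ∈ (Ideal.span {X 0 ^ 4, X 1 ^ 4, X 2 ^ 3} : Ideal (MvPolynomial (Fin 3) k)) ↔
      ∀ m ∈ p.support, 4 ≤ m 0 ∨ 4 ≤ m 1 ∨ 3 ≤ m 2 := by
  rw [J_eq_mon, mem_ideal_span_monomial_image]
  constructor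
  · intro h m hm
    obtain ⟨si, hsi, hle⟩ := h m hm
    rcases hsi with rfl | rfl | rfl
    · exact Or.inl (by simpa using (fs_le_iff.mp hle).1)
    · exact Or.inr (Or.inl (by simpa using (fs_le_iff.mp hle).2.1))
    · exact Or.inr (Or.inr (by simpa using (fs_le_iff.mp hle).2.2))
  · intro h m hm
    rcases h m hm with h' | h' | h'
    · exact ⟨fs 4 0 0, by simp, fs_le_iff.mpr ⟨h', by simp, by simp⟩⟩
    · exact ⟨fs 0 4 0, by simp, fs_le_iff.mpr ⟨by simp, h', by simp⟩⟩
    · exact ⟨fs 0 0 3, by simp, fs_le_iff.mpr ⟨by simp, by simp, h'⟩⟩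

lemma mem_I_iff {p : MvPolynomial (Fin 3) k} :
    p ∈ (Ideal.span {X 0 ^ 2, X 1 ^ 2} : Ideal (MvPolynomial (Fin 3) k)) ↔
      ∀ m ∈ p.support, 2 ≤ m 0 ∨ 2 ≤ m 1 := by
  rw [I_eq_mon, mem_ideal_span_monomial_image]
  constructor
  · intro h m hm
    obtain ⟨si, hsi, hle⟩ := h m hm
    rcases hsi with rfl | rfl
    · exact Or.inl (by simpa using (fs_le_iff.mp hle).1)
    · exact Or.inr (by simpa using (fs_le_iff.mp hle).2.1)
  · intro h m hm
    rcases h m hm with h' | h'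
    · exact ⟨fs 2 0 0, by simp, fs_le_iff.mpr ⟨h', by simp, by simp⟩⟩
    · exact ⟨fs 0 2 0, by simp, fs_le_iff.mpr ⟨by simp, h', by simp⟩⟩


def w3 : Fin 6 → ℕ × ℕ × ℕ := ![(3,0,0),(2,1,0),(2,0,1),(1,2,0),(0,3,0),(0,2,1)]

def w6 : Fin 6 → ℕ × ℕ × ℕ := ![(3,3,0),(3,2,1),(2,3,1),(3,1,2),(2,2,2),(1,3,2)]

noncomputable def B3 : Fin 6 → (Fin 3 →₀ ℕ) := fun i => fs (w3 i).1 (w3 i).2.1 (w3 i).2.2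

noncomputable def B6 : Fin 6 → (Fin 3 →₀ ℕ) := fun i => fs (w6 i).1 (w6 i).2.1 (w6 i).2.2

variable (k) in
/-- The span of the candidate monomial basis. -/
noncomputable def VB (B : Fin 6 → (Fin 3 →₀ ℕ)) : Submodule k (MvPolynomial (Fin 3) k) :=
  Submodule.span k (Set.range fun i => monomial (B i) (1 : k))

lemma support_subset_of_mem_VB {B : Fin 6 → (Fin 3 →₀ ℕ)} {p : MvPolynomial (Fin 3) k}
    (hp : p ∈ VB k B) : ∀ m ∈ p.support, ∃ i, m = B i := by
  refine Submodule.span_induction ?_ ?_ ?_ ?_ hp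
  · rintro x ⟨i, rfl⟩ m hm
    exact ⟨i, Finset.mem_singleton.mp (support_monomial_subset hm)⟩
  · simp
  · intro x y _ _ hx hy m hm
    rcases Finset.mem_union.mp (MvPolynomial.support_add hm) with h | h
    · exact hx m h
    · exact hy m h
  · intro c x _ hx m hm
    exact hx m (Finsupp.support_smul hm)

lemma piece_eq (d : ℕ) (B : Fin 6 → (Fin 3 →₀ ℕ))
    (hdeg : ∀ i, (B i).degree = d)
    (hBI : ∀ i, 2 ≤ B i 0 ∨ 2 ≤ B i 1)
    (hcover : ∀ m : Fin 3 →₀ ℕ, m.degree = d → (2 ≤ m 0 ∨ 2 ≤ m 1) →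
      (∃ i, m = B i) ∨ (4 ≤ m 0 ∨ 4 ≤ m 1 ∨ 3 ≤ m 2)) :
    gradedPiece (Ideal.span {X 0 ^ 4, X 1 ^ 4, X 2 ^ 3})
        (Ideal.span {X 0 ^ 2, X 1 ^ 2}) d =
      Submodule.map (Ideal.Quotient.mkₐ k
          (Ideal.span {X 0 ^ 4, X 1 ^ 4, X 2 ^ 3})).toLinearMap (VB k B) := by
  set J : Ideal (MvPolynomial (Fin 3) k) := Ideal.span {X 0 ^ 4, X 1 ^ 4, X 2 ^ 3} with hJ
  set f := (Ideal.Quotient.mkₐ k J).toLinearMap with hf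
  apply le_antisymm
  · rw [gradedPiece, Submodule.map_le_iff_le_comap]
    rintro p ⟨hpI, hpH⟩
    rw [Submodule.mem_comap]
    simp only [SetLike.mem_coe, Submodule.restrictScalars_mem] at hpI
    simp only [SetLike.mem_coe, mem_homogeneousSubmodule] at hpH
    have hrw : p = ∑ m ∈ p.support, monomial m (coeff m p) := as_sum p
    rw [hrw, map_sum]
    apply Submodule.sum_mem
    intro m hm
    have hc : coeff m p ≠ 0 := mem_support_iff.mp hm
    have hdm : m.degree = d := by
      have := hpH hc
      rwa [Pi.one_def, ← Finsupp.degree_eq_weight_one] at this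
    have hdiv : 2 ≤ m 0 ∨ 2 ≤ m 1 := mem_I_iff.mp hpI m hm
    rcases hcover m hdm hdiv with ⟨i, rfl⟩ | hJm
    · exact Submodule.mem_map_of_mem (by
        have : monomial (B i) (coeff (B i) p) = coeff (B i) p • monomial (B i) (1 : k) := by
          rw [smul_monomial, smul_eq_mul, mul_one]
        rw [this]
        exact Submodule.smul_mem _ _ (Submodule.subset_span ⟨i, rfl⟩))
    · have hmem : monomial m (coeff m p) ∈ J := by
        rw [hJ, mem_J_iff]
        intro m' hm'
        rcases Finset.mem_singleton.mp (support_monomial_subset hm') with rfl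
        exact hJm
      have h0 : f (monomial m (coeff m p)) = 0 := by
        rw [hf, AlgHom.toLinearMap_apply, Ideal.Quotient.mkₐ_eq_mk,
          Ideal.Quotient.eq_zero_iff_mem]
        exact hmem
      rw [h0]; exact Submodule.zero_mem _
  · apply Submodule.map_mono
    rw [VB, Submodule.span_le]
    rintro x ⟨i, rfl⟩
    constructor
    · rw [SetLike.mem_coe, Submodule.restrictScalars_mem, mem_I_iff]
      intro m hm
      rcases Finset.mem_singleton.mp (support_monomial_subset hm) with rfl
      exact hBI i
    · rw [SetLike.mem_coe, mem_homogeneousSubmodule]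
      exact isHomogeneous_monomial _ (hdeg i)

lemma VB_inter_J {B : Fin 6 → (Fin 3 →₀ ℕ)}
    (hBJ : ∀ i, ¬(4 ≤ B i 0 ∨ 4 ≤ B i 1 ∨ 3 ≤ B i 2))
    {p : MvPolynomial (Fin 3) k} (hp : p ∈ VB k B)
    (hpJ : p ∈ (Ideal.span {X 0 ^ 4, X 1 ^ 4, X 2 ^ 3} : Ideal (MvPolynomial (Fin 3) k))) :
    p = 0 := by
  rw [mem_J_iff] at hpJ
  rw [← support_eq_empty, Finset.eq_empty_iff_forall_notMem]
  intro m hm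
  obtain ⟨i, rfl⟩ := support_subset_of_mem_VB hp m hm
  exact hBJ i (hpJ _ hm)

lemma finrank_VB {B : Fin 6 → (Fin 3 →₀ ℕ)} (hBinj : Function.Injective B) :
    Module.finrank k (VB k B) = 6 := by
  have hli : LinearIndependent k fun i => monomial (B i) (1 : k) := by
    have := (MvPolynomial.basisMonomials (Fin 3) k).linearIndependent.comp B hBinj
    exact this
  rw [VB, finrank_span_eq_card hli, Fintype.card_fin]

lemma piece_finrank (d : ℕ) (B : Fin 6 → (Fin 3 →₀ ℕ))
    (hdeg : ∀ i, (B i).degree = d)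
    (hBI : ∀ i, 2 ≤ B i 0 ∨ 2 ≤ B i 1)
    (hcover : ∀ m : Fin 3 →₀ ℕ, m.degree = d → (2 ≤ m 0 ∨ 2 ≤ m 1) →
      (∃ i, m = B i) ∨ (4 ≤ m 0 ∨ 4 ≤ m 1 ∨ 3 ≤ m 2))
    (hBinj : Function.Injective B)
    (hBJ : ∀ i, ¬(4 ≤ B i 0 ∨ 4 ≤ B i 1 ∨ 3 ≤ B i 2)) :
    Module.finrank k (gradedPiece
      (Ideal.span {X 0 ^ 4, X 1 ^ 4, X 2 ^ 3} : Ideal (MvPolynomial (Fin 3) k))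
      (Ideal.span {X 0 ^ 2, X 1 ^ 2}) d) = 6 := by
  rw [piece_eq d B hdeg hBI hcover]
  set J : Ideal (MvPolynomial (Fin 3) k) := Ideal.span {X 0 ^ 4, X 1 ^ 4, X 2 ^ 3} with hJ
  set f := (Ideal.Quotient.mkₐ k J).toLinearMap with hf
  have hrange : Submodule.map f (VB k B) = LinearMap.range (f ∘ₗ (VB k B).subtype) := by
    rw [LinearMap.range_comp, Submodule.range_subtype]
  rw [hrange]
  have hinj : Function.Injective (f ∘ₗ (VB k B).subtype) := by
    rw [← LinearMap.ker_eq_bot, LinearMap.ker_eq_bot']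
    rintro ⟨p, hp⟩ h
    have h' : Ideal.Quotient.mk J p = 0 := by
      simp only [hf, LinearMap.comp_apply, Submodule.coe_subtype,
        AlgHom.toLinearMap_apply, Ideal.Quotient.mkₐ_eq_mk] at h
      exact h
    exact Subtype.ext (VB_inter_J hBJ hp (Ideal.Quotient.eq_zero_iff_mem.mp h'))
  rw [LinearMap.finrank_range_of_inj hinj]
  exact finrank_VB hBinj

lemma Bw_facts (w : Fin 6 → ℕ × ℕ × ℕ) (d : ℕ)
    (h1 : ∀ i, (w i).1 + (w i).2.1 + (w i).2.2 = d)
    (h2 : ∀ i, 2 ≤ (w i).1 ∨ 2 ≤ (w i).2.1)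
    (h3 : ∀ i j, ((w i).1 = (w j).1 ∧ (w i).2.1 = (w j).2.1 ∧ (w i).2.2 = (w j).2.2) → i = j)
    (h4 : ∀ i, ¬(4 ≤ (w i).1 ∨ 4 ≤ (w i).2.1 ∨ 3 ≤ (w i).2.2)) :
    (∀ i, (fs (w i).1 (w i).2.1 (w i).2.2 : Fin 3 →₀ ℕ).degree = d) ∧
    (∀ i, 2 ≤ (fs (w i).1 (w i).2.1 (w i).2.2 : Fin 3 →₀ ℕ) 0 ∨
          2 ≤ (fs (w i).1 (w i).2.1 (w i).2.2 : Fin 3 →₀ ℕ) 1) ∧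
    Function.Injective (fun i => (fs (w i).1 (w i).2.1 (w i).2.2 : Fin 3 →₀ ℕ)) ∧
    (∀ i, ¬(4 ≤ (fs (w i).1 (w i).2.1 (w i).2.2 : Fin 3 →₀ ℕ) 0 ∨
            4 ≤ (fs (w i).1 (w i).2.1 (w i).2.2 : Fin 3 →₀ ℕ) 1 ∨
            3 ≤ (fs (w i).1 (w i).2.1 (w i).2.2 : Fin 3 →₀ ℕ) 2)) := by
  refine ⟨?_, ?_, ?_, ?_⟩
  · intro i; rw [fs_degree]; exact h1 i
  · intro i; rw [fs_apply0, fs_apply1]; exact h2 i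
  · intro i j hij; exact h3 i j (fs_eq_iff.mp hij)
  · intro i; rw [fs_apply0, fs_apply1, fs_apply2]; exact h4 i

lemma B3_facts :
    (∀ i, (B3 i).degree = 3) ∧ (∀ i, 2 ≤ B3 i 0 ∨ 2 ≤ B3 i 1) ∧
      Function.Injective B3 ∧ (∀ i, ¬(4 ≤ B3 i 0 ∨ 4 ≤ B3 i 1 ∨ 3 ≤ B3 i 2)) :=
  Bw_facts w3 3 (by decide) (by decide) (by decide) (by decide)

lemma B6_facts :
    (∀ i, (B6 i).degree = 6) ∧ (∀ i, 2 ≤ B6 i 0 ∨ 2 ≤ B6 i 1) ∧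
      Function.Injective B6 ∧ (∀ i, ¬(4 ≤ B6 i 0 ∨ 4 ≤ B6 i 1 ∨ 3 ≤ B6 i 2)) :=
  Bw_facts w6 6 (by decide) (by decide) (by decide) (by decide)

lemma cover3 : ∀ m : Fin 3 →₀ ℕ, m.degree = 3 → (2 ≤ m 0 ∨ 2 ≤ m 1) →
    (∃ i, m = B3 i) ∨ (4 ≤ m 0 ∨ 4 ≤ m 1 ∨ 3 ≤ m 2) := by
  intro m hd hdiv
  rw [degree_eq] at hd
  left
  have hm := (fs_eq_self m).symm
  have hcase : (m 0 = 3 ∧ m 1 = 0 ∧ m 2 = 0) ∨ (m 0 = 2 ∧ m 1 = 1 ∧ m 2 = 0) ∨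
      (m 0 = 2 ∧ m 1 = 0 ∧ m 2 = 1) ∨ (m 0 = 1 ∧ m 1 = 2 ∧ m 2 = 0) ∨
      (m 0 = 0 ∧ m 1 = 3 ∧ m 2 = 0) ∨ (m 0 = 0 ∧ m 1 = 2 ∧ m 2 = 1) := by omega
  rcases hcase with ⟨h0, h1, h2⟩ | ⟨h0, h1, h2⟩ | ⟨h0, h1, h2⟩ | ⟨h0, h1, h2⟩ |
      ⟨h0, h1, h2⟩ | ⟨h0, h1, h2⟩ <;> rw [h0, h1, h2] at hm
  · exact ⟨0, by rw [hm]; rfl⟩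
  · exact ⟨1, by rw [hm]; rfl⟩
  · exact ⟨2, by rw [hm]; rfl⟩
  · exact ⟨3, by rw [hm]; rfl⟩
  · exact ⟨4, by rw [hm]; rfl⟩
  · exact ⟨5, by rw [hm]; rfl⟩

lemma cover6 : ∀ m : Fin 3 →₀ ℕ, m.degree = 6 → (2 ≤ m 0 ∨ 2 ≤ m 1) →
    (∃ i, m = B6 i) ∨ (4 ≤ m 0 ∨ 4 ≤ m 1 ∨ 3 ≤ m 2) := by
  intro m hd hdiv
  rw [degree_eq] at hd
  by_cases hbig : 4 ≤ m 0 ∨ 4 ≤ m 1 ∨ 3 ≤ m 2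
  · exact Or.inr hbig
  left
  push_neg at hbig
  have hm := (fs_eq_self m).symm
  have hcase : (m 0 = 3 ∧ m 1 = 3 ∧ m 2 = 0) ∨ (m 0 = 3 ∧ m 1 = 2 ∧ m 2 = 1) ∨
      (m 0 = 2 ∧ m 1 = 3 ∧ m 2 = 1) ∨ (m 0 = 3 ∧ m 1 = 1 ∧ m 2 = 2) ∨
      (m 0 = 2 ∧ m 1 = 2 ∧ m 2 = 2) ∨ (m 0 = 1 ∧ m 1 = 3 ∧ m 2 = 2) := by omega
  rcases hcase with ⟨h0, h1, h2⟩ | ⟨h0, h1, h2⟩ | ⟨h0, h1, h2⟩ | ⟨h0, h1, h2⟩ |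
      ⟨h0, h1, h2⟩ | ⟨h0, h1, h2⟩ <;> rw [h0, h1, h2] at hm
  · exact ⟨0, by rw [hm]; rfl⟩
  · exact ⟨1, by rw [hm]; rfl⟩
  · exact ⟨2, by rw [hm]; rfl⟩
  · exact ⟨3, by rw [hm]; rfl⟩
  · exact ⟨4, by rw [hm]; rfl⟩
  · exact ⟨5, by rw [hm]; rfl⟩


/-- A general linear form. -/
noncomputable def lin (a b c : k) : MvPolynomial (Fin 3) k :=
  C a * X 0 + C b * X 1 + C c * X 2

/-- The kernel element `(b y - a x)(a² x² + b² y²)`. -/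
noncomputable def gker (a b : k) : MvPolynomial (Fin 3) k :=
  (C b * X 1 - C a * X 0) * (C (a ^ 2) * X 0 ^ 2 + C (b ^ 2) * X 1 ^ 2)

lemma gker_mem_I (a b : k) :
    gker a b ∈ (Ideal.span {X 0 ^ 2, X 1 ^ 2} : Ideal (MvPolynomial (Fin 3) k)) := by
  refine Ideal.mem_span_pair.mpr
    ⟨C (a ^ 2 * b) * X 1 - C (a ^ 3) * X 0, C (b ^ 3) * X 1 - C (a * b ^ 2) * X 0, ?_⟩
  rw [gker]
  push_cast [map_mul, map_pow, map_sub]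
  ring

lemma gker_hom (a b : k) : (gker a b).IsHomogeneous 3 := by
  have h1 : (C b * X 1 - C a * X 0 : MvPolynomial (Fin 3) k).IsHomogeneous 1 :=
    (isHomogeneous_C_mul_X b 1).sub (isHomogeneous_C_mul_X a 0)
  have h2 : (C (a ^ 2) * X 0 ^ 2 + C (b ^ 2) * X 1 ^ 2 :
      MvPolynomial (Fin 3) k).IsHomogeneous 2 :=
    (isHomogeneous_C_mul_X_pow (a ^ 2) 0 2).add (isHomogeneous_C_mul_X_pow (b ^ 2) 1 2)
  have h3 := h1.mul h2
  rw [gker]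
  exact h3

lemma lin_hom (a b c : k) : (lin a b c).IsHomogeneous 1 :=
  ((isHomogeneous_C_mul_X a 0).add (isHomogeneous_C_mul_X b 1)).add
    (isHomogeneous_C_mul_X c 2)

/-- The key identity: `ℓ³ · g ∈ J`. -/
lemma lin_pow_mul_gker_mem_J (a b c : k) :
    lin a b c ^ 3 * gker a b ∈
      (Ideal.span {X 0 ^ 4, X 1 ^ 4, X 2 ^ 3} : Ideal (MvPolynomial (Fin 3) k)) := by
  have hx : (X 0 ^ 4 : MvPolynomial (Fin 3) k) ∈
      (Ideal.span {X 0 ^ 4, X 1 ^ 4, X 2 ^ 3} : Ideal (MvPolynomial (Fin 3) k)) :=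
    Ideal.subset_span (by simp)
  have hy : (X 1 ^ 4 : MvPolynomial (Fin 3) k) ∈
      (Ideal.span {X 0 ^ 4, X 1 ^ 4, X 2 ^ 3} : Ideal (MvPolynomial (Fin 3) k)) :=
    Ideal.subset_span (by simp)
  have hz : (X 2 ^ 3 : MvPolynomial (Fin 3) k) ∈
      (Ideal.span {X 0 ^ 4, X 1 ^ 4, X 2 ^ 3} : Ideal (MvPolynomial (Fin 3) k)) :=
    Ideal.subset_span (by simp)
  have hQ : lin a b c ^ 3 * gker a b =
      (-(C (a ^ 4)) * ((C a * X 0 + C b * X 1) ^ 2 +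
          3 * (C a * X 0 + C b * X 1) * (C c * X 2) + 3 * (C c * X 2) ^ 2)) * X 0 ^ 4 +
        (C (b ^ 4) * ((C a * X 0 + C b * X 1) ^ 2 +
          3 * (C a * X 0 + C b * X 1) * (C c * X 2) + 3 * (C c * X 2) ^ 2)) * X 1 ^ 4 +
        (C (c ^ 3) * gker a b) * X 2 ^ 3 := by
    rw [lin, gker]
    push_cast [map_mul, map_pow]
    ring
  rw [hQ]
  exact add_mem (add_mem (Ideal.mul_mem_left _ _ hx) (Ideal.mul_mem_left _ _ hy))
    (Ideal.mul_mem_left _ _ hz)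

lemma mon_fs (a b c : ℕ) :
    (monomial (fs a b c) (1 : k)) = X 0 ^ a * X 1 ^ b * X 2 ^ c := by
  rw [X_pow_mon, X_pow_mon, X_pow_mon, monomial_mul, monomial_mul, fs]
  simp

lemma gker_expand (a b : k) :
    gker a b = C (a ^ 2 * b) * monomial (fs 2 1 0) 1 + C (b ^ 3) * monomial (fs 0 3 0) 1
      - C (a ^ 3) * monomial (fs 3 0 0) 1 - C (a * b ^ 2) * monomial (fs 1 2 0) 1 := by
  rw [gker]
  simp only [mon_fs, map_mul, map_pow]
  ring

lemma coeff_gker_x (a b : k) : coeff (fs 3 0 0) (gker a b) = -(a ^ 3) := by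
  rw [gker_expand, coeff_sub, coeff_sub, coeff_add, coeff_C_mul, coeff_C_mul, coeff_C_mul,
    coeff_C_mul, coeff_monomial, coeff_monomial, coeff_monomial, coeff_monomial,
    if_neg (by simp [fs_eq_iff]), if_neg (by simp [fs_eq_iff]), if_pos rfl,
    if_neg (by simp [fs_eq_iff])]
  ring

lemma coeff_gker_y (a b : k) : coeff (fs 0 3 0) (gker a b) = b ^ 3 := by
  rw [gker_expand, coeff_sub, coeff_sub, coeff_add, coeff_C_mul, coeff_C_mul, coeff_C_mul,
    coeff_C_mul, coeff_monomial, coeff_monomial, coeff_monomial, coeff_monomial,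
    if_neg (by simp [fs_eq_iff]), if_pos rfl, if_neg (by simp [fs_eq_iff]),
    if_neg (by simp [fs_eq_iff])]
  ring

lemma gker_not_mem_J (a b : k) (hab : a ≠ 0 ∨ b ≠ 0) :
    gker a b ∉ (Ideal.span {X 0 ^ 4, X 1 ^ 4, X 2 ^ 3} : Ideal (MvPolynomial (Fin 3) k)) := by
  intro hmem
  rw [mem_J_iff] at hmem
  rcases hab with ha | hb
  · have hc : coeff (fs 3 0 0) (gker a b) ≠ 0 := by
      rw [coeff_gker_x]
      simpa using pow_ne_zero 3 ha
    have := hmem _ (mem_support_iff.mpr hc)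
    simp at this
  · have hc : coeff (fs 0 3 0) (gker a b) ≠ 0 := by
      rw [coeff_gker_y]
      exact pow_ne_zero 3 hb
    have := hmem _ (mem_support_iff.mpr hc)
    simp at this


lemma hom1_eq {ℓ : MvPolynomial (Fin 3) k} (h : ℓ.IsHomogeneous 1) :
    ℓ = lin (coeff (fs 1 0 0) ℓ) (coeff (fs 0 1 0) ℓ) (coeff (fs 0 0 1) ℓ) := by
  have hlin : ∀ a b c : k, lin a b c =
      C a * monomial (fs 1 0 0) 1 + C b * monomial (fs 0 1 0) 1 + C c * monomial (fs 0 0 1) 1 := by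
    intro a b c
    rw [lin]
    simp only [mon_fs]
    ring
  apply MvPolynomial.ext
  intro m
  have hdeg : ∀ m' : Fin 3 →₀ ℕ, coeff m' ℓ ≠ 0 → m' 0 + m' 1 + m' 2 = 1 := by
    intro m' hm'
    have := h hm'
    rw [Pi.one_def, ← Finsupp.degree_eq_weight_one] at this
    rwa [degree_eq] at this
  rw [hlin, coeff_add, coeff_add, coeff_C_mul, coeff_C_mul, coeff_C_mul,
    coeff_monomial, coeff_monomial, coeff_monomial]
  by_cases hd : m 0 + m 1 + m 2 = 1
  · have hm := (fs_eq_self m).symm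
    have hcase : (m 0 = 1 ∧ m 1 = 0 ∧ m 2 = 0) ∨ (m 0 = 0 ∧ m 1 = 1 ∧ m 2 = 0) ∨
        (m 0 = 0 ∧ m 1 = 0 ∧ m 2 = 1) := by omega
    rcases hcase with ⟨h0, h1, h2⟩ | ⟨h0, h1, h2⟩ | ⟨h0, h1, h2⟩ <;> rw [h0, h1, h2] at hm
    · rw [if_pos hm.symm, if_neg (by rw [hm]; simp [fs_eq_iff]),
        if_neg (by rw [hm]; simp [fs_eq_iff]), hm]
      ring
    · rw [if_neg (by rw [hm]; simp [fs_eq_iff]), if_pos hm.symm,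
        if_neg (by rw [hm]; simp [fs_eq_iff]), hm]
      ring
    · rw [if_neg (by rw [hm]; simp [fs_eq_iff]), if_neg (by rw [hm]; simp [fs_eq_iff]),
        if_pos hm.symm, hm]
      ring
  · have hz : coeff m ℓ = 0 := by
      by_contra hc
      exact hd (hdeg m hc)
    rw [hz, if_neg (fun he => hd (by rw [← he]; simp)),
      if_neg (fun he => hd (by rw [← he]; simp)), if_neg (fun he => hd (by rw [← he]; simp))]
    ring


end Stmt18Aux

set_option maxHeartbeats 1000000 in
set_option synthInstance.maxHeartbeats 400000 in
open Stmt18Aux in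
/-- **Example.** Let `k` be a field of characteristic zero, `S = k[x,y,z]`, and
`N = (x², y²)/(x⁴, y⁴, z³)`.  Then `dim_k N₃ = dim_k N₆ = 6`, and the class of
`(x−y)(x²+y²)` is a nonzero element of `N₃` killed by `(x+y+z)³`; consequently `N`
does not have the strong Lefschetz property. -/
theorem stmt18 {k : Type} [Field k] [CharZero k]
    (I J : Ideal (MvPolynomial (Fin 3) k))
    (hI : I = Ideal.span {X 0 ^ 2, X 1 ^ 2})
    (hJ : J = Ideal.span {X 0 ^ 4, X 1 ^ 4, X 2 ^ 3}) :
    Module.finrank k (gradedPiece J I 3) = 6 ∧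
    Module.finrank k (gradedPiece J I 6) = 6 ∧
    Ideal.Quotient.mk J ((X 0 - X 1) * (X 0 ^ 2 + X 1 ^ 2)) ∈ gradedPiece J I 3 ∧
    Ideal.Quotient.mk J ((X 0 - X 1) * (X 0 ^ 2 + X 1 ^ 2) : MvPolynomial (Fin 3) k) ≠ 0 ∧
    Ideal.Quotient.mk J ((X 0 + X 1 + X 2) ^ 3 * ((X 0 - X 1) * (X 0 ^ 2 + X 1 ^ 2)) :
      MvPolynomial (Fin 3) k) = 0 ∧
    ¬ HasSLP J I := by
  subst hI hJ
  set I : Ideal (MvPolynomial (Fin 3) k) := Ideal.span {X 0 ^ 2, X 1 ^ 2} with hI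
  set J : Ideal (MvPolynomial (Fin 3) k) := Ideal.span {X 0 ^ 4, X 1 ^ 4, X 2 ^ 3} with hJ
  obtain ⟨hd3, hi3, hinj3, hnj3⟩ := B3_facts
  obtain ⟨hd6, hi6, hinj6, hnj6⟩ := B6_facts
  have hrank3 : Module.finrank k (gradedPiece J I 3) = 6 :=
    piece_finrank 3 B3 hd3 hi3 cover3 hinj3 hnj3
  have hrank6 : Module.finrank k (gradedPiece J I 6) = 6 :=
    piece_finrank 6 B6 hd6 hi6 cover6 hinj6 hnj6
  -- the distinguished kernel element
  have hp : ((X 0 - X 1) * (X 0 ^ 2 + X 1 ^ 2) : MvPolynomial (Fin 3) k) = -gker 1 1 := by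
    rw [gker]
    simp only [one_pow, map_one, one_mul]
    ring
  have hpmem : Ideal.Quotient.mk J ((X 0 - X 1) * (X 0 ^ 2 + X 1 ^ 2)) ∈ gradedPiece J I 3 := by
    refine ⟨(X 0 - X 1) * (X 0 ^ 2 + X 1 ^ 2), Submodule.mem_inf.mpr ⟨?_, ?_⟩, ?_⟩
    · rw [Submodule.restrictScalars_mem, hp, hI]
      exact neg_mem (gker_mem_I 1 1)
    · rw [mem_homogeneousSubmodule, hp]
      exact (gker_hom 1 1).neg
    · simp [Ideal.Quotient.mkₐ_eq_mk]
  have hpne : Ideal.Quotient.mk J ((X 0 - X 1) * (X 0 ^ 2 + X 1 ^ 2) :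
      MvPolynomial (Fin 3) k) ≠ 0 := by
    rw [Ne, Ideal.Quotient.eq_zero_iff_mem, hp, hJ, neg_mem_iff]
    exact gker_not_mem_J 1 1 (Or.inl one_ne_zero)
  have hpkill : Ideal.Quotient.mk J ((X 0 + X 1 + X 2) ^ 3 *
      ((X 0 - X 1) * (X 0 ^ 2 + X 1 ^ 2)) : MvPolynomial (Fin 3) k) = 0 := by
    rw [Ideal.Quotient.eq_zero_iff_mem]
    have he : ((X 0 + X 1 + X 2) ^ 3 * ((X 0 - X 1) * (X 0 ^ 2 + X 1 ^ 2)) :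
        MvPolynomial (Fin 3) k) = -(lin 1 1 1 ^ 3 * gker 1 1) := by
      rw [hp, lin]
      simp only [map_one, one_mul]
      ring
    rw [he, hJ, neg_mem_iff]
    exact lin_pow_mul_gker_mem_J 1 1 1
  refine ⟨hrank3, hrank6, hpmem, hpne, hpkill, ?_⟩
  -- no strong Lefschetz element
  rintro ⟨ℓ, hℓmem, hsle⟩
  have hℓhom : ℓ.IsHomogeneous 1 := (mem_homogeneousSubmodule _ _).mp hℓmem
  set a : k := coeff (fs 1 0 0) ℓ with ha
  set b : k := coeff (fs 0 1 0) ℓ with hb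
  set c : k := coeff (fs 0 0 1) ℓ with hc
  have hℓ : ℓ = lin a b c := hom1_eq hℓhom
  have h33 := hsle 3 (by norm_num) 3
  rw [show (3 + 3 : ℕ) = 6 from rfl] at h33
  -- multiplication by ℓ³ kills gker a b
  have hkillg : Ideal.Quotient.mk J (ℓ ^ 3) * Ideal.Quotient.mk J (gker a b) = 0 := by
    rw [← map_mul, Ideal.Quotient.eq_zero_iff_mem, hℓ, hJ]
    exact lin_pow_mul_gker_mem_J a b c
  by_cases hab : a = 0 ∧ b = 0
  · -- degenerate case : ℓ³ ∈ J
    have hz3 : ℓ ^ 3 ∈ J := by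
      rw [hℓ, hab.1, hab.2]
      have : lin 0 0 c ^ 3 = C (c ^ 3) * X 2 ^ 3 := by
        rw [lin]
        simp only [map_zero, zero_mul, zero_add, map_pow]
        rw [mul_pow]
      rw [this, hJ]
      exact Ideal.mul_mem_left _ _ (Ideal.subset_span (by simp))
    have hz : Ideal.Quotient.mk J (ℓ ^ 3) = 0 := Ideal.Quotient.eq_zero_iff_mem.mpr hz3
    have hmonP3 : Ideal.Quotient.mk J (monomial (fs 3 0 0) (1 : k)) ∈ gradedPiece J I 3 := by
      refine ⟨monomial (fs 3 0 0) 1, Submodule.mem_inf.mpr ⟨?_, ?_⟩, ?_⟩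
      · rw [Submodule.restrictScalars_mem, hI, mem_I_iff]
        intro m hm
        rcases Finset.mem_singleton.mp (support_monomial_subset hm) with rfl
        simp
      · rw [mem_homogeneousSubmodule]
        exact isHomogeneous_monomial _ (by simp)
      · simp [Ideal.Quotient.mkₐ_eq_mk]
    have hmonne : Ideal.Quotient.mk J (monomial (fs 3 0 0) (1 : k)) ≠ 0 := by
      rw [Ne, Ideal.Quotient.eq_zero_iff_mem, hJ, mem_J_iff]
      intro h
      have := h (fs 3 0 0) (by
        rw [mem_support_iff, coeff_monomial, if_pos rfl]
        exact one_ne_zero)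
      simp at this
    rcases h33 with hinjc | hsurjc
    · exact hmonne (hinjc _ hmonP3 (by rw [hz, zero_mul]))
    · have hmonP6 : Ideal.Quotient.mk J (monomial (fs 3 3 0) (1 : k)) ∈ gradedPiece J I 6 := by
        refine ⟨monomial (fs 3 3 0) 1, Submodule.mem_inf.mpr ⟨?_, ?_⟩, ?_⟩
        · rw [Submodule.restrictScalars_mem, hI, mem_I_iff]
          intro m hm
          rcases Finset.mem_singleton.mp (support_monomial_subset hm) with rfl
          simp
        · rw [mem_homogeneousSubmodule]
          exact isHomogeneous_monomial _ (by simp)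
        · simp [Ideal.Quotient.mkₐ_eq_mk]
      obtain ⟨m, _, heq⟩ := hsurjc _ hmonP6
      rw [hz, zero_mul] at heq
      have : Ideal.Quotient.mk J (monomial (fs 3 3 0) (1 : k)) ≠ 0 := by
        rw [Ne, Ideal.Quotient.eq_zero_iff_mem, hJ, mem_J_iff]
        intro h
        have := h (fs 3 3 0) (by
          rw [mem_support_iff, coeff_monomial, if_pos rfl]
          exact one_ne_zero)
        simp at this
      exact this heq.symm
  · -- main case : gker a b is a nonzero kernel element
    have hab' : a ≠ 0 ∨ b ≠ 0 := by tauto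
    have hgP3 : Ideal.Quotient.mk J (gker a b) ∈ gradedPiece J I 3 := by
      refine ⟨gker a b, Submodule.mem_inf.mpr ⟨?_, ?_⟩, ?_⟩
      · rw [Submodule.restrictScalars_mem, hI]
        exact gker_mem_I a b
      · rw [mem_homogeneousSubmodule]
        exact gker_hom a b
      · simp [Ideal.Quotient.mkₐ_eq_mk]
    have hgne : Ideal.Quotient.mk J (gker a b) ≠ 0 := by
      rw [Ne, Ideal.Quotient.eq_zero_iff_mem, hJ]
      exact gker_not_mem_J a b hab'
    rcases h33 with hinjc | hsurjc
    · exact hgne (hinjc _ hgP3 hkillg)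
    · -- rank-nullity contradiction
      have e3 := piece_eq (k := k) 3 B3 hd3 hi3 cover3
      haveI : FiniteDimensional k (VB k B3) :=
        FiniteDimensional.span_of_finite k (Set.finite_range _)
      haveI hfd3 : FiniteDimensional k (gradedPiece J I 3) := by
        rw [hJ, hI, e3]
        exact Module.Finite.map _ _
      have hLmap : ∀ x ∈ gradedPiece J I 3,
          (LinearMap.mulLeft k (Ideal.Quotient.mk J (ℓ ^ 3))) x ∈ gradedPiece J I 6 := by
        rintro x ⟨p, hpmem', rfl⟩
        obtain ⟨hpI, hpH⟩ := Submodule.mem_inf.mp hpmem'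
        rw [Submodule.restrictScalars_mem] at hpI
        rw [mem_homogeneousSubmodule] at hpH
        refine ⟨ℓ ^ 3 * p, Submodule.mem_inf.mpr ⟨?_, ?_⟩, ?_⟩
        · rw [Submodule.restrictScalars_mem]
          exact Ideal.mul_mem_left _ _ hpI
        · rw [mem_homogeneousSubmodule]
          exact (hℓhom.pow 3).mul hpH
        · rw [LinearMap.mulLeft_apply, AlgHom.toLinearMap_apply, AlgHom.toLinearMap_apply,
            Ideal.Quotient.mkₐ_eq_mk]
          exact map_mul _ _ _
      set L : gradedPiece J I 3 →ₗ[k] gradedPiece J I 6 :=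
        (LinearMap.mulLeft k (Ideal.Quotient.mk J (ℓ ^ 3))).restrict hLmap with hL
      have hLsurj : Function.Surjective L := by
        rintro ⟨m', hm'⟩
        obtain ⟨m, hm, heq⟩ := hsurjc m' hm'
        refine ⟨⟨m, hm⟩, Subtype.ext ?_⟩
        simp only [hL, LinearMap.restrict_coe_apply, LinearMap.mulLeft_apply]
        exact heq
      have hkerL : (⟨Ideal.Quotient.mk J (gker a b), hgP3⟩ : gradedPiece J I 3) ∈
          LinearMap.ker L := by
        rw [LinearMap.mem_ker, hL]
        refine Subtype.ext ?_
        simp only [LinearMap.restrict_coe_apply, LinearMap.mulLeft_apply,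
          ZeroMemClass.coe_zero]
        exact hkillg
      have hrk := LinearMap.finrank_range_add_finrank_ker L
      rw [LinearMap.range_eq_top.mpr hLsurj, finrank_top, hrank6, hrank3] at hrk
      have hker0 : Module.finrank k (LinearMap.ker L) = 0 := by omega
      rw [Submodule.finrank_eq_zero] at hker0
      rw [hker0, Submodule.mem_bot] at hkerL
      have hv := congrArg Subtype.val hkerL
      simp only [ZeroMemClass.coe_zero] at hv
      exact hgne hv
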